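/- Let g, l1, l2 be positive real numbers with l1 ≠ l2. If λ1, λ2 : ℝ → ℝ are twice differentiable functions satisfying λ1'' + λ2'' = 0, l1·λ1'' + g·λ1 = 0, and l2·λ2'' + g·λ2 = 0 (at every point of ℝ), then λ1 = 0 and λ2 = 0 identically. -/

import Mathlib

/-- Injectivity of the formal adjoint of the double-pendulum control operator
when the two pendulum lengths are distinct. -/
theorem double_pendulum_adjoint_injective
    (g l1 l2 : ℝ) (hg : 0 < g) (hl1 : 0 < l1) (hl2 : 0 < l2) (hne : l1 ≠ l2)
    (lam1 lam2 : ℝ → ℝ)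
    (hlam1 : Differentiable ℝ lam1) (hlam1' : Differentiable ℝ (deriv lam1))
    (hlam2 : Differentiable ℝ lam2) (hlam2' : Differentiable ℝ (deriv lam2))
    (h1 : ∀ t : ℝ, deriv (deriv lam1) t + deriv (deriv lam2) t = 0)
    (h2 : ∀ t : ℝ, l1 * deriv (deriv lam1) t + g * lam1 t = 0)
    (h3 : ∀ t : ℝ, l2 * deriv (deriv lam2) t + g * lam2 t = 0) :
    (∀ t : ℝ, lam1 t = 0) ∧ (∀ t : ℝ, lam2 t = 0) := by
  set c : ℝ := -(l2 / l1) with hc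
  -- pointwise relation lam2 = c * lam1
  have hrel : lam2 = fun t => c * lam1 t := by
    funext t
    have e1 := h1 t
    have e2 := h2 t
    have e3 := h3 t
    have hl1' := hl1.ne'
    have hg' := hg.ne'
    field_simp [hc]
    have key : g * (lam2 t * l1) = g * (-(l2 * lam1 t)) := by
      linear_combination l2 * e2 + l1 * e3 - l1 * l2 * e1
    have key' := mul_left_cancel₀ hg' key
    rw [hc]
    field_simp
    linarith
  -- first derivative
  have hd1 : deriv lam2 = fun t => c * deriv lam1 t := by
    funext t
    rw [hrel]
    exact deriv_const_mul c (hlam1 t)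
  -- second derivative
  have hd2 : ∀ t, deriv (deriv lam2) t = c * deriv (deriv lam1) t := by
    intro t
    rw [hd1]
    exact deriv_const_mul c (hlam1' t)
  have hlam1_zero : ∀ t : ℝ, lam1 t = 0 := by
    intro t
    have e1 := h1 t
    have e2 := h2 t
    have ed := hd2 t
    -- from e1: lam2'' = -lam1''; from ed: lam2'' = c * lam1''; c ≠ -1
    have hA : deriv (deriv lam1) t = 0 := by
      have hc1 : c + 1 ≠ 0 := by
        rw [hc]
        intro h
        apply hne
        field_simp at h
        linarith
      have : (c + 1) * deriv (deriv lam1) t = 0 := by linarith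
      exact (mul_eq_zero.mp this).resolve_left hc1
    have := h2 t
    rw [hA] at this
    have hg' := hg.ne'
    nlinarith
  refine ⟨hlam1_zero, fun t => ?_⟩
  rw [hrel]
  simp [hlam1_zero t]
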